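/- If at iteration T of the cutting plane algorithm the newly generated constraint d_{T+1} = argmax_{d∈D}(-f(α_T,d)) already belongs to the current constraint set C_T (i.e., C_{T+1} = C_T), then β_T = θ* = φ_T, and (α_T, d_T) is a globally optimal solution pair of the semi-infinite problem min_{α∈A} max_{d∈D} (-f(α,d)). -/

import Mathlib

/-- if at iteration T the new worst-case constraint d_{T+1} already
belongs to the current constraint set C_T = {d_0,...,d_T}, then β_T = θ* = φ_T and
(α_T, d_T) is globally optimal for min_{α∈A} max_{d∈D}(-f(α,d)), i.e. α_T attains θ*. -/
theorem stmt5 (n m : ℕ) (A : Set (Fin n → ℝ)) (D : Set (Fin m → ℝ))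
    (hAne : A.Nonempty) (hDne : D.Nonempty)
    (hAc : IsCompact A) (hAconv : Convex ℝ A)
    (hDc : IsCompact D) (hDconv : Convex ℝ D)
    (f : (Fin n → ℝ) → (Fin m → ℝ) → ℝ)
    (hfcont : ContinuousOn (fun p : (Fin n → ℝ) × (Fin m → ℝ) => f p.1 p.2) (A ×ˢ D))
    (αseq : ℕ → Fin n → ℝ) (dseq : ℕ → Fin m → ℝ)
    (hαmem : ∀ T, αseq T ∈ A) (hdmem : ∀ T, dseq T ∈ D)
    (hαopt : ∀ T, ∀ α ∈ A,
      (Finset.range (T+1)).sup' Finset.nonempty_range_add_one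
          (fun i => -f (αseq T) (dseq i)) ≤
        (Finset.range (T+1)).sup' Finset.nonempty_range_add_one
          (fun i => -f α (dseq i)))
    (hworst : ∀ T, ∀ d ∈ D, -f (αseq T) d ≤ -f (αseq T) (dseq (T+1)))
    (θstar : ℝ) (hθ : θstar = ⨅ α : A, ⨆ d : D, -f α d)
    (β φ : ℕ → ℝ)
    (hβ : ∀ T, β T = (Finset.range (T+1)).sup' Finset.nonempty_range_add_one
      (fun i => -f (αseq T) (dseq i)))
    (hφ : ∀ T, φ T = (Finset.range (T+1)).inf' Finset.nonempty_range_add_one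
      (fun j => -f (αseq j) (dseq (j+1))))
    (T : ℕ)
    (hstop : ∃ i ≤ T, dseq (T+1) = dseq i) :
    β T = θstar ∧ θstar = φ T ∧ (⨆ d : D, -f (αseq T) d) = θstar := by
  have : Nonempty ↑D := hDne.to_subtype
  have : Nonempty ↑A := hAne.to_subtype
  obtain ⟨i, hiT, hdi⟩ := hstop
  obtain ⟨M, hMmem⟩ := ((hAc.prod hDc).image_of_continuousOn hfcont).bddAbove
  have hM : ∀ p ∈ A ×ˢ D, f p.1 p.2 ≤ M := fun p hp => hMmem ⟨p, hp, rfl⟩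
  have h1 : ∀ α ∈ A, BddAbove (Set.range fun d : D => -f α d) := by
    intro α hα
    have hcont : ContinuousOn (fun d => -f α d) D := by
      have : ContinuousOn (fun d : Fin m → ℝ => f α d) D := by
        have hmap : Set.MapsTo (fun d : Fin m → ℝ => ((α, d) : (Fin n → ℝ) × (Fin m → ℝ))) D (A ×ˢ D) :=
          fun d hd => ⟨hα, hd⟩
        exact hfcont.comp (Continuous.continuousOn (by continuity)) hmap
      exact this.neg
    obtain ⟨M', hM'⟩ := (hDc.image_of_continuousOn hcont).bddAbove
    refine ⟨M', ?_⟩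
    rintro x ⟨d, rfl⟩
    exact hM' ⟨d, d.2, rfl⟩
  have h2 : ∀ T', (⨆ d : D, -f (αseq T') d) = -f (αseq T') (dseq (T'+1)) := by
    intro T'
    apply le_antisymm
    · exact ciSup_le fun d => hworst T' d d.2
    · exact le_ciSup (h1 _ (hαmem T')) ⟨dseq (T'+1), hdmem (T'+1)⟩
  have h3 : BddBelow (Set.range fun α : A => ⨆ d : D, -f α d) := by
    obtain ⟨d0, hd0⟩ := hDne
    refine ⟨-M, ?_⟩
    rintro x ⟨α, rfl⟩
    have h4 : -M ≤ -f α.1 d0 := by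
      have := hM (α.1, d0) ⟨α.2, hd0⟩
      simpa using neg_le_neg this
    exact h4.trans (le_ciSup (h1 α.1 α.2) ⟨d0, hd0⟩)
  have hθle : ∀ α ∈ A, θstar ≤ ⨆ d : D, -f α d := fun α hα => by
    rw [hθ]; exact ciInf_le h3 ⟨α, hα⟩
  have hβθ : β T ≤ θstar := by
    rw [hθ]
    apply le_ciInf
    rintro ⟨α, hα⟩
    calc β T ≤ (Finset.range (T+1)).sup' Finset.nonempty_range_add_one
          (fun i => -f α (dseq i)) := by rw [hβ]; exact hαopt T α hα
      _ ≤ ⨆ d : D, -f α d := by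
          apply Finset.sup'_le
          intro j _
          exact le_ciSup (h1 α hα) ⟨dseq j, hdmem j⟩
  have hgβ : (⨆ d : D, -f (αseq T) d) ≤ β T := by
    rw [h2 T, hdi, hβ]
    exact Finset.le_sup' (fun j => -f (αseq T) (dseq j)) (Finset.mem_range.mpr (Nat.lt_succ_of_le hiT))
  have hθg := hθle (αseq T) (hαmem T)
  have hβg : β T = θstar := le_antisymm hβθ (hθg.trans hgβ)
  have hgθ : (⨆ d : D, -f (αseq T) d) = θstar := le_antisymm (hgβ.trans hβθ) hθg
  refine ⟨hβg, ?_, hgθ⟩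
  apply le_antisymm
  · rw [hφ]
    apply Finset.le_inf'
    intro j _
    calc θstar ≤ ⨆ d : D, -f (αseq j) d := hθle _ (hαmem j)
      _ = -f (αseq j) (dseq (j+1)) := h2 j
  · rw [hφ]
    calc (Finset.range (T+1)).inf' Finset.nonempty_range_add_one
          (fun j => -f (αseq j) (dseq (j+1))) ≤ -f (αseq T) (dseq (T+1)) :=
            Finset.inf'_le _ (Finset.mem_range.mpr (Nat.lt_succ_self T))
      _ = ⨆ d : D, -f (αseq T) d := (h2 T).symm
      _ = θstar := hgθ
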